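/- Let S = {s_1, …, s_n} with 0 < s_1 < s_2 < … < s_n real numbers, n ≥ 1, and M = 1 + s_n. Let A be the two-clock timed automaton with additive constraints over Σ = {♦, ♠} described in the context, and let u = 2(M − s_n) ♦ 2(s_n − s_{n−1}) ♦ … ♦ 2(s_2 − s_1) ♦ 2s_1. Then the set of clock valuations ν such that some run of A on the timed word u ♠ u ♠ starts in the configuration (p_1, (x = 0, y = 0)) and ends in a configuration (r_1, ν) is exactly {(x = 2a + 2M, y = 2b) : a, b ∈ S}. -/

import Mathlib

/-- Clock conditions with additive constraints:
`γ ::= true | x < c | x > c | x = c | (Σ_{x∈Z} x) ∼ c | γ ∧ γ | γ ∨ γ`. -/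
inductive ACond (X : Type) where
  | tt : ACond X
  | lt : X → ℝ → ACond X
  | gt : X → ℝ → ACond X
  | eq : X → ℝ → ACond X
  | sumLt : Finset X → ℝ → ACond X
  | sumGt : Finset X → ℝ → ACond X
  | sumEq : Finset X → ℝ → ACond X
  | conj : ACond X → ACond X → ACond X
  | disj : ACond X → ACond X → ACond X

/-- Satisfaction of an additive clock condition by a clock valuation. -/
def ACond.sat {X : Type} (ν : X → ℝ) : ACond X → Prop
  | .tt => True
  | .lt x c => ν x < c
  | .gt x c => ν x > c
  | .eq x c => ν x = c
  | .sumLt Z c => ∑ x ∈ Z, ν x < c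
  | .sumGt Z c => ∑ x ∈ Z, ν x > c
  | .sumEq Z c => ∑ x ∈ Z, ν x = c
  | .conj γ₁ γ₂ => γ₁.sat ν ∧ γ₂.sat ν
  | .disj γ₁ γ₂ => γ₁.sat ν ∨ γ₂.sat ν

/-- A timed automaton with additive constraints. -/
structure ATA (A Q X : Type) where
  I : Set Q
  E : Set (Q × A × ACond X × Q × Set X)
  F : Set Q

/-- One step of a timed automaton with additive constraints on a stream
element. -/
def ATA.Step {A Q X : Type} (M : ATA A Q X) (e : A ⊕ ℝ)
    (c c' : Q × (X → ℝ)) : Prop :=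
  match e with
  | .inr r => c'.1 = c.1 ∧ ∀ x, c'.2 x = c.2 x + r
  | .inl a => ∃ γ Z, (c.1, a, γ, c'.1, Z) ∈ M.E ∧ γ.sat c.2 ∧
      (∀ x ∈ Z, c'.2 x = 0) ∧ (∀ x ∉ Z, c'.2 x = c.2 x)

/-- A run of a timed automaton with additive constraints on a timed word. -/
inductive ATA.RunFrom {A Q X : Type} (M : ATA A Q X) :
    List (A ⊕ ℝ) → (Q × (X → ℝ)) → (Q × (X → ℝ)) → Prop
  | nil (c) : M.RunFrom [] c c
  | cons {e w c c' c''} : M.Step e c c' → M.RunFrom w c' c'' →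
      M.RunFrom (e :: w) c c''

/-- Acceptance of a timed word. -/
def ATA.Accepts {A Q X : Type} (M : ATA A Q X) (w : List (A ⊕ ℝ)) : Prop :=
  ∃ q₀ ∈ M.I, ∃ c' : Q × (X → ℝ), M.RunFrom w (q₀, fun _ => 0) c' ∧ c'.1 ∈ M.F

/-- The two-letter alphabet `{♦, ♠}`. -/
inductive Sig where
  | dia : Sig
  | spade : Sig

/-- The states of the 3SUM automaton. -/
inductive St where
  | p1 : St
  | p2 : St
  | q1 : St
  | q2 : St
  | r1 : St
  | r2 : St

/-- The transitions of the 3SUM automaton, over clocks `Bool` with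
`x = false` and `y = true`. -/
def threeSumE (M : ℝ) : Set (St × Sig × ACond Bool × St × Set Bool) :=
  {(St.p1, Sig.dia, ACond.tt, St.p1, (∅ : Set Bool)),
   (St.p1, Sig.dia, ACond.tt, St.p2, ({false} : Set Bool)),
   (St.p2, Sig.dia, ACond.tt, St.p2, (∅ : Set Bool)),
   (St.p2, Sig.spade, ACond.tt, St.q1, ({true} : Set Bool)),
   (St.q1, Sig.dia, ACond.tt, St.q1, (∅ : Set Bool)),
   (St.q1, Sig.dia, ACond.tt, St.q2, ({true} : Set Bool)),
   (St.q2, Sig.dia, ACond.tt, St.q2, (∅ : Set Bool)),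
   (St.q2, Sig.spade, ACond.tt, St.r1, (∅ : Set Bool)),
   (St.r1, Sig.dia, ACond.tt, St.r1, (∅ : Set Bool)),
   (St.r1, Sig.dia, ACond.sumEq Finset.univ (4 * M), St.r2, (∅ : Set Bool)),
   (St.r2, Sig.dia, ACond.tt, St.r2, (∅ : Set Bool))}

/-- The 3SUM automaton with parameter `M`: initial state `p₁`, final state
`r₂`. -/
def threeSumAut (M : ℝ) : ATA Sig St Bool :=
  ⟨{St.p1}, threeSumE M, {St.r2}⟩

/-- The timed word `2(prev − s_n) ♦ 2(s_n − s_{n−1}) ♦ … ♦ 2(s_2 − s_1) ♦ 2s_1`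
built from the descending list `[s_n, …, s_1]` and the starting value
`prev`. -/
def uFrom (prev : ℝ) : List ℝ → List (Sig ⊕ ℝ)
  | [] => [Sum.inr (2 * prev)]
  | s :: rest => Sum.inr (2 * (prev - s)) :: Sum.inl Sig.dia :: uFrom s rest

/-- The timed word `(prev − s_n) ♦ (s_n − s_{n−1}) ♦ … ♦ (s_2 − s_1) ♦` built
from the descending list `[s_n, …, s_1]` and the starting value `prev`. -/
def vFrom (prev : ℝ) : List ℝ → List (Sig ⊕ ℝ)
  | [] => []
  | s :: rest => Sum.inr (prev - s) :: Sum.inl Sig.dia :: vFrom s rest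

section Aux
open St Sig

variable {M : ℝ}

theorem runFrom_append {A Q X : Type} (Ma : ATA A Q X) (w1 w2 : List (A ⊕ ℝ))
    (c c'' : Q × (X → ℝ)) :
    Ma.RunFrom (w1 ++ w2) c c'' ↔ ∃ c', Ma.RunFrom w1 c c' ∧ Ma.RunFrom w2 c' c'' := by
  induction w1 generalizing c with
  | nil =>
    constructor
    · intro h; exact ⟨c, .nil c, h⟩
    · rintro ⟨c', h1, h2⟩; cases h1; exact h2
  | cons e w ih =>
    constructor
    · intro h
      cases h with
      | cons hs hr =>
        obtain ⟨c', h1, h2⟩ := (ih _).1 hr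
        exact ⟨c', .cons hs h1, h2⟩
    · rintro ⟨c', h1, h2⟩
      cases h1 with
      | cons hs hr => exact .cons hs ((ih _).2 ⟨c', hr, h2⟩)

theorem time_inv {r : ℝ} {c c' : St × (Bool → ℝ)}
    (h : (threeSumAut M).Step (Sum.inr r) c c') :
    c' = (c.1, fun b => c.2 b + r) :=
  Prod.ext h.1 (funext h.2)

theorem run_single {e : Sig ⊕ ℝ} {c c'' : St × (Bool → ℝ)}
    (h : (threeSumAut M).RunFrom [e] c c'') : (threeSumAut M).Step e c c'' := by
  cases h with
  | cons hs hr => cases hr; exact hs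

theorem mem_p1 {γ : ACond Bool} {q' : St} {Z : Set Bool}
    (h : (St.p1, Sig.dia, γ, q', Z) ∈ threeSumE M) :
    (γ = .tt ∧ q' = p1 ∧ Z = ∅) ∨ (γ = .tt ∧ q' = p2 ∧ Z = {false}) := by
  simp only [threeSumE, Set.mem_insert_iff, Set.mem_singleton_iff, Prod.mk.injEq] at h
  tauto

theorem mem_q1 {γ : ACond Bool} {q' : St} {Z : Set Bool}
    (h : (St.q1, Sig.dia, γ, q', Z) ∈ threeSumE M) :
    (γ = .tt ∧ q' = q1 ∧ Z = ∅) ∨ (γ = .tt ∧ q' = q2 ∧ Z = {true}) := by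
  simp only [threeSumE, Set.mem_insert_iff, Set.mem_singleton_iff, Prod.mk.injEq] at h
  tauto

theorem mem_p2 {γ : ACond Bool} {q' : St} {Z : Set Bool}
    (h : (St.p2, Sig.dia, γ, q', Z) ∈ threeSumE M) : q' = p2 ∧ Z = ∅ := by
  simp only [threeSumE, Set.mem_insert_iff, Set.mem_singleton_iff, Prod.mk.injEq] at h
  tauto

theorem mem_q2 {γ : ACond Bool} {q' : St} {Z : Set Bool}
    (h : (St.q2, Sig.dia, γ, q', Z) ∈ threeSumE M) : q' = q2 ∧ Z = ∅ := by
  simp only [threeSumE, Set.mem_insert_iff, Set.mem_singleton_iff, Prod.mk.injEq] at h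
  tauto

theorem mem_spade {q : St} {γ : ACond Bool} {q' : St} {Z : Set Bool}
    (h : (q, Sig.spade, γ, q', Z) ∈ threeSumE M) :
    (q = p2 ∧ q' = q1 ∧ Z = {true}) ∨ (q = q2 ∧ q' = r1 ∧ Z = ∅) := by
  simp only [threeSumE, Set.mem_insert_iff, Set.mem_singleton_iff, Prod.mk.injEq] at h
  tauto

theorem spade_step {c c' : St × (Bool → ℝ)}
    (h : (threeSumAut M).Step (.inl Sig.spade) c c') :
    (c.1 = p2 ∧ c'.1 = q1 ∧ c'.2 true = 0 ∧ c'.2 false = c.2 false) ∨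
    (c.1 = q2 ∧ c'.1 = r1 ∧ c'.2 = c.2) := by
  obtain ⟨γ, Z, hmem, hsat, hres, hkeep⟩ := h
  rcases mem_spade hmem with ⟨h1, h2, h3⟩ | ⟨h1, h2, h3⟩
  · subst h3
    refine Or.inl ⟨h1, h2, hres true rfl, hkeep false (by simp)⟩
  · subst h3
    exact Or.inr ⟨h1, h2, funext fun b => hkeep b (Set.notMem_empty b)⟩

theorem inert_fwd {q : St}
    (hq : (q, Sig.dia, ACond.tt, q, (∅ : Set Bool)) ∈ threeSumE M) :
    ∀ (lst : List ℝ) (prev : ℝ) (ν : Bool → ℝ),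
      (threeSumAut M).RunFrom (uFrom prev lst) (q, ν) (q, fun b => ν b + 2 * prev) := by
  intro lst
  induction lst with
  | nil =>
    intro prev ν
    exact .cons (c' := (q, fun b => ν b + 2 * prev)) ⟨rfl, fun _ => rfl⟩ (.nil _)
  | cons s rest ih =>
    intro prev ν
    have he : (fun b => ν b + 2 * prev) = fun b => (ν b + 2 * (prev - s)) + 2 * s := by
      funext b; ring
    rw [he]
    refine .cons (c' := (q, fun b => ν b + 2 * (prev - s))) ⟨rfl, fun _ => rfl⟩ ?_
    refine .cons (c' := (q, fun b => ν b + 2 * (prev - s)))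
      ⟨.tt, ∅, hq, trivial, fun x hx => (Set.notMem_empty x hx).elim, fun x _ => rfl⟩ ?_
    exact ih s _

theorem inert_bwd {q : St}
    (hq : ∀ γ q' Z, (q, Sig.dia, γ, q', Z) ∈ threeSumE M → q' = q ∧ Z = ∅) :
    ∀ (lst : List ℝ) (prev : ℝ) (ν : Bool → ℝ) (c'' : St × (Bool → ℝ)),
      (threeSumAut M).RunFrom (uFrom prev lst) (q, ν) c'' →
      c'' = (q, fun b => ν b + 2 * prev) := by
  intro lst
  induction lst with
  | nil =>
    intro prev ν c'' h
    cases h with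
    | cons hs hr => cases hr; exact time_inv hs
  | cons s rest ih =>
    intro prev ν c'' h
    cases h with
    | cons hs1 hr1 =>
      rename_i c1
      have h1 : c1 = (q, fun b => ν b + 2 * (prev - s)) := by
        have := time_inv hs1; simpa using this
      subst h1
      cases hr1 with
      | cons hs2 hr2 =>
        rename_i c2
        obtain ⟨γ, Z, hmem, hsat, hres, hkeep⟩ := hs2
        obtain ⟨hq', hZ⟩ := hq γ c2.1 Z hmem
        subst hZ
        have hc2 : c2 = (q, fun b => ν b + 2 * (prev - s)) :=
          Prod.ext hq' (funext fun b => hkeep b (Set.notMem_empty b))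
        subst hc2
        rw [ih s _ c'' hr2]
        exact Prod.ext rfl (funext fun b => by simp only; ring)
theorem pphase_fwd :
    ∀ (lst : List ℝ) (prev : ℝ) (ν : Bool → ℝ) (a : ℝ), a ∈ lst →
      (threeSumAut M).RunFrom (uFrom prev lst) (p1, ν)
        (p2, fun b => if b then ν true + 2 * prev else 2 * a) := by
  intro lst
  induction lst with
  | nil => intro _ _ _ ha; exact absurd ha List.not_mem_nil
  | cons s rest ih =>
    intro prev ν a ha
    have hmem1 : (p1, Sig.dia, ACond.tt, p1, (∅ : Set Bool)) ∈ threeSumE M := by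
      simp [threeSumE]
    have hmem2 : (p1, Sig.dia, ACond.tt, p2, ({false} : Set Bool)) ∈ threeSumE M := by
      simp [threeSumE]
    rcases List.mem_cons.1 ha with rfl | ha
    · -- reset now
      have he : (fun b : Bool => if b then ν true + 2 * prev else 2 * a) =
          fun b : Bool => (if b then ν true + 2 * (prev - a) else 0) + 2 * a := by
        funext b; cases b <;> simp <;> ring
      rw [he]
      refine .cons (c' := (p1, fun b => ν b + 2 * (prev - a))) ⟨rfl, fun _ => rfl⟩ ?_
      refine .cons (c' := (p2, fun b => if b then ν true + 2 * (prev - a) else 0))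
        ⟨.tt, {false}, hmem2, trivial, ?_, ?_⟩ ?_
      · intro x hx
        rcases hx with rfl
        simp
      · intro x hx
        have hx' : x = true := by
          cases x
          · exact absurd rfl hx
          · rfl
        subst hx'
        simp
      · have hq2 : (p2, Sig.dia, ACond.tt, p2, (∅ : Set Bool)) ∈ threeSumE M := by
          simp [threeSumE]
        exact inert_fwd hq2 rest a _
    · -- reset later
      have he : (fun b : Bool => if b then ν true + 2 * prev else 2 * a) =
          fun b : Bool => if b then (ν true + 2 * (prev - s)) + 2 * s else 2 * a := by
        funext b; cases b <;> simp <;> ring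
      rw [he]
      refine .cons (c' := (p1, fun b => ν b + 2 * (prev - s))) ⟨rfl, fun _ => rfl⟩ ?_
      refine .cons (c' := (p1, fun b => ν b + 2 * (prev - s)))
        ⟨.tt, ∅, hmem1, trivial, fun x hx => (Set.notMem_empty x hx).elim,
          fun x _ => rfl⟩ ?_
      exact ih s _ a ha

theorem qphase_fwd :
    ∀ (lst : List ℝ) (prev : ℝ) (ν : Bool → ℝ) (a : ℝ), a ∈ lst →
      (threeSumAut M).RunFrom (uFrom prev lst) (q1, ν)
        (q2, fun b => if b then 2 * a else ν false + 2 * prev) := by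
  intro lst
  induction lst with
  | nil => intro _ _ _ ha; exact absurd ha List.not_mem_nil
  | cons s rest ih =>
    intro prev ν a ha
    have hmem1 : (q1, Sig.dia, ACond.tt, q1, (∅ : Set Bool)) ∈ threeSumE M := by
      simp [threeSumE]
    have hmem2 : (q1, Sig.dia, ACond.tt, q2, ({true} : Set Bool)) ∈ threeSumE M := by
      simp [threeSumE]
    rcases List.mem_cons.1 ha with rfl | ha
    · have he : (fun b : Bool => if b then 2 * a else ν false + 2 * prev) =
          fun b : Bool => (if b then 0 else ν false + 2 * (prev - a)) + 2 * a := by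
        funext b; cases b <;> simp <;> ring
      rw [he]
      refine .cons (c' := (q1, fun b => ν b + 2 * (prev - a))) ⟨rfl, fun _ => rfl⟩ ?_
      refine .cons (c' := (q2, fun b => if b then 0 else ν false + 2 * (prev - a)))
        ⟨.tt, {true}, hmem2, trivial, ?_, ?_⟩ ?_
      · intro x hx
        rcases hx with rfl
        simp
      · intro x hx
        have hx' : x = false := by
          cases x
          · rfl
          · exact absurd rfl hx
        subst hx'
        simp
      · have hq2 : (q2, Sig.dia, ACond.tt, q2, (∅ : Set Bool)) ∈ threeSumE M := by
          simp [threeSumE]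
        exact inert_fwd hq2 rest a _
    · have he : (fun b : Bool => if b then 2 * a else ν false + 2 * prev) =
          fun b : Bool => if b then 2 * a else (ν false + 2 * (prev - s)) + 2 * s := by
        funext b; cases b <;> simp <;> ring
      rw [he]
      refine .cons (c' := (q1, fun b => ν b + 2 * (prev - s))) ⟨rfl, fun _ => rfl⟩ ?_
      refine .cons (c' := (q1, fun b => ν b + 2 * (prev - s)))
        ⟨.tt, ∅, hmem1, trivial, fun x hx => (Set.notMem_empty x hx).elim,
          fun x _ => rfl⟩ ?_
      exact ih s _ a ha
theorem pphase_bwd :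
    ∀ (lst : List ℝ) (prev : ℝ) (ν : Bool → ℝ) (c'' : St × (Bool → ℝ)),
      (threeSumAut M).RunFrom (uFrom prev lst) (p1, ν) c'' →
      c'' = (p1, fun b => ν b + 2 * prev) ∨
        ∃ a ∈ lst, c'' = (p2, fun b : Bool => if b then ν true + 2 * prev else 2 * a) := by
  intro lst
  induction lst with
  | nil =>
    intro prev ν c'' h
    cases h with
    | cons hs hr => cases hr; exact Or.inl (time_inv hs)
  | cons s rest ih =>
    intro prev ν c'' h
    cases h with
    | cons hs1 hr1 =>
      rename_i c1
      have h1 : c1 = (p1, fun b => ν b + 2 * (prev - s)) := by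
        have := time_inv hs1; simpa using this
      subst h1
      cases hr1 with
      | cons hs2 hr2 =>
        rename_i c2
        obtain ⟨γ, Z, hmem, hsat, hres, hkeep⟩ := hs2
        rcases mem_p1 hmem with ⟨-, hq', hZ⟩ | ⟨-, hq', hZ⟩
        · subst hZ
          have hc2 : c2 = (p1, fun b => ν b + 2 * (prev - s)) :=
            Prod.ext hq' (funext fun b => hkeep b (Set.notMem_empty b))
          subst hc2
          rcases ih s _ c'' hr2 with h | ⟨a, ha, h⟩
          · left
            rw [h]
            exact Prod.ext rfl (funext fun b => by simp only; ring)
          · right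
            refine ⟨a, List.mem_cons_of_mem _ ha, ?_⟩
            rw [h]
            refine Prod.ext rfl (funext fun b => ?_)
            cases b <;> simp <;> ring
        · subst hZ
          have hc2 : c2 = (p2, fun b : Bool => if b then ν true + 2 * (prev - s) else 0) := by
            refine Prod.ext hq' (funext fun b => ?_)
            cases b
            · simpa using hres false rfl
            · simpa using hkeep true (by simp)
          subst hc2
          have h3 := inert_bwd (fun γ q' Z h => mem_p2 h) rest s _ c'' hr2
          right
          refine ⟨s, List.mem_cons_self, ?_⟩
          rw [h3]
          refine Prod.ext rfl (funext fun b => ?_)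
          cases b <;> simp <;> ring

theorem qphase_bwd :
    ∀ (lst : List ℝ) (prev : ℝ) (ν : Bool → ℝ) (c'' : St × (Bool → ℝ)),
      (threeSumAut M).RunFrom (uFrom prev lst) (q1, ν) c'' →
      c'' = (q1, fun b => ν b + 2 * prev) ∨
        ∃ a ∈ lst, c'' = (q2, fun b : Bool => if b then 2 * a else ν false + 2 * prev) := by
  intro lst
  induction lst with
  | nil =>
    intro prev ν c'' h
    cases h with
    | cons hs hr => cases hr; exact Or.inl (time_inv hs)
  | cons s rest ih =>
    intro prev ν c'' h
    cases h with
    | cons hs1 hr1 =>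
      rename_i c1
      have h1 : c1 = (q1, fun b => ν b + 2 * (prev - s)) := by
        have := time_inv hs1; simpa using this
      subst h1
      cases hr1 with
      | cons hs2 hr2 =>
        rename_i c2
        obtain ⟨γ, Z, hmem, hsat, hres, hkeep⟩ := hs2
        rcases mem_q1 hmem with ⟨-, hq', hZ⟩ | ⟨-, hq', hZ⟩
        · subst hZ
          have hc2 : c2 = (q1, fun b => ν b + 2 * (prev - s)) :=
            Prod.ext hq' (funext fun b => hkeep b (Set.notMem_empty b))
          subst hc2
          rcases ih s _ c'' hr2 with h | ⟨a, ha, h⟩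
          · left
            rw [h]
            exact Prod.ext rfl (funext fun b => by simp only; ring)
          · right
            refine ⟨a, List.mem_cons_of_mem _ ha, ?_⟩
            rw [h]
            refine Prod.ext rfl (funext fun b => ?_)
            cases b <;> simp <;> ring
        · subst hZ
          have hc2 : c2 = (q2, fun b : Bool => if b then 0 else ν false + 2 * (prev - s)) := by
            refine Prod.ext hq' (funext fun b => ?_)
            cases b
            · simpa using hkeep false (by simp)
            · simpa using hres true rfl
          subst hc2
          have h3 := inert_bwd (fun γ q' Z h => mem_q2 h) rest s _ c'' hr2
          right
          refine ⟨s, List.mem_cons_self, ?_⟩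
          rw [h3]
          refine Prod.ext rfl (funext fun b => ?_)
          cases b <;> simp <;> ring

/-- For `S = {s_1 < … < s_n}` (positive reals, given as the sorted list `l`),
`M = 1 + s_n`, and `u = 2(M − s_n) ♦ … ♦ 2(s_2 − s_1) ♦ 2s_1`, the clock
valuations reachable from `(p₁, (0, 0))` at state `r₁` by a run of the 3SUM
automaton on `u ♠ u ♠` are exactly `{(x = 2a + 2M, y = 2b) : a, b ∈ S}`. -/
theorem stmt15 (l : List ℝ) (hne : l ≠ []) (hsort : l.Pairwise (· < ·))
    (hpos : ∀ x ∈ l, 0 < x) :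
    {ν : Bool → ℝ |
        (threeSumAut (1 + l.getLast hne)).RunFrom
          (uFrom (1 + l.getLast hne) l.reverse ++ [Sum.inl Sig.spade] ++
            uFrom (1 + l.getLast hne) l.reverse ++ [Sum.inl Sig.spade])
          (St.p1, fun _ => 0) (St.r1, ν)} =
      {ν : Bool → ℝ | ∃ a ∈ l, ∃ b ∈ l,
        ν false = 2 * a + 2 * (1 + l.getLast hne) ∧ ν true = 2 * b} := by
  set Mv := 1 + l.getLast hne with hMv
  ext ν
  simp only [Set.mem_setOf_eq]
  constructor
  · intro h
    obtain ⟨c3, hA, hB⟩ := (runFrom_append _ _ _ _ _).1 h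
    obtain ⟨c2, hC, hD⟩ := (runFrom_append _ _ _ _ _).1 hA
    obtain ⟨c1, hE, hF⟩ := (runFrom_append _ _ _ _ _).1 hC
    rcases pphase_bwd l.reverse Mv _ c1 hE with h1 | ⟨a, ha, h1⟩
    · rcases spade_step (run_single hF) with ⟨hx, -⟩ | ⟨hx, -⟩ <;>
        simp [h1] at hx
    · rcases spade_step (run_single hF) with ⟨-, hc2q, hty, hfy⟩ | ⟨hx, -⟩
      swap
      · simp [h1] at hx
      rw [h1] at hfy
      simp only at hfy
      obtain ⟨c2s, μ2⟩ := c2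
      simp only at hc2q hty hfy
      subst hc2q
      have hμ2 : μ2 = fun x : Bool => if x then 0 else 2 * a := by
        funext x
        cases x
        · simpa using hfy
        · simpa using hty
      subst hμ2
      rcases qphase_bwd l.reverse Mv _ c3 hD with h3 | ⟨b, hb, h3⟩
      · rcases spade_step (run_single hB) with ⟨hx, -⟩ | ⟨hx, -⟩ <;>
          simp [h3] at hx
      · rcases spade_step (run_single hB) with ⟨hx, -⟩ | ⟨-, -, hν⟩
        · simp [h3] at hx
        rw [h3] at hν
        simp only at hν
        refine ⟨a, List.mem_reverse.1 ha, b, List.mem_reverse.1 hb, ?_, ?_⟩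
        · have := congrFun hν false
          simpa using this
        · have := congrFun hν true
          simpa using this
  · rintro ⟨a, ha, b, hb, hf, ht⟩
    have ha' := List.mem_reverse.2 ha
    have hb' := List.mem_reverse.2 hb
    have run1 := pphase_fwd (M := Mv) l.reverse Mv (fun _ => 0) a ha'
    have run2 : (threeSumAut Mv).RunFrom [Sum.inl Sig.spade]
        (p2, fun x : Bool => if x then (fun _ : Bool => (0:ℝ)) true + 2 * Mv else 2 * a)
        (q1, fun x : Bool => if x then 0 else 2 * a) := by
      refine .cons ⟨.tt, {true}, by simp [threeSumAut, threeSumE], trivial, ?_, ?_⟩ (.nil _)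
      · intro x hx
        have hx' : x = true := Set.mem_singleton_iff.1 hx
        subst hx'
        simp
      · intro x hx
        cases x
        · simp
        · exact absurd rfl hx
    have run3 := qphase_fwd (M := Mv) l.reverse Mv (fun x : Bool => if x then 0 else 2 * a) b hb'
    have hν : ν = fun x : Bool =>
        if x then 2 * b else (fun x : Bool => if x then (0:ℝ) else 2 * a) false + 2 * Mv := by
      funext x
      cases x
      · simpa using hf
      · simpa using ht
    have run4 : (threeSumAut Mv).RunFrom [Sum.inl Sig.spade]
        (q2, fun x : Bool =>
          if x then 2 * b else (fun x : Bool => if x then (0:ℝ) else 2 * a) false + 2 * Mv)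
        (St.r1, ν) := by
      rw [hν]
      refine .cons (c' := (St.r1, fun x : Bool =>
          if x then 2 * b else (fun x : Bool => if x then (0:ℝ) else 2 * a) false + 2 * Mv))
        ⟨.tt, ∅, by simp [threeSumAut, threeSumE], trivial,
        fun x hx => absurd hx (Set.notMem_empty x), fun x _ => rfl⟩ (.nil _)
    exact (runFrom_append _ _ _ _ _).2 ⟨_, (runFrom_append _ _ _ _ _).2
      ⟨_, (runFrom_append _ _ _ _ _).2 ⟨_, run1, run2⟩, run3⟩, run4⟩

end Aux
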